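/- Let f be a twice continuously differentiable real function of n variables with a local minimum at x̄ where the Hessian H is positive definite. Then for the quadratic approximation, the constrained minimum over {x : x_a = x̄_a + σ} of the second-order Taylor model f(x̄) + ½⟨x−x̄, H(x−x̄)⟩ equals f(x̄) + σ²/(2 (H⁻¹)_{aa}). -/

import Mathlib

open scoped Matrix

theorem stmt_17 (n : ℕ) (H : Matrix (Fin n) (Fin n) ℝ)
    (hsymm : H.IsSymm) (hpd : H.PosDef) (xbar : Fin n → ℝ) (σ fxbar : ℝ) (a : Fin n)
    (q : (Fin n → ℝ) → ℝ)
    (hq : ∀ x, q x = fxbar + (1 / 2) * ((x - xbar) ⬝ᵥ H.mulVec (x - xbar))) :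
    sInf (q '' {x | x a = xbar a + σ}) = fxbar + σ ^ 2 / (2 * H⁻¹ a a) := by
  have hdet : IsUnit H.det := (Matrix.isUnit_iff_isUnit_det H).1 hpd.isUnit
  have hmul : H * H⁻¹ = 1 := Matrix.mul_nonsing_inv H hdet
  set e : Fin n → ℝ := Pi.single a 1 with he
  set u : Fin n → ℝ := H⁻¹.mulVec e with hu
  have hinvpd : (H⁻¹).PosDef := hpd.inv
  set β : ℝ := H⁻¹ a a with hβ
  have hua : u a = β := by
    simp [hu, he, Matrix.mulVec_single, hβ]
  have hβpos : 0 < β := by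
    have hne : e ≠ 0 := by
      intro h
      have := congrFun h a
      simp [he] at this
    have := hinvpd.dotProduct_mulVec_pos hne
    simpa [he, single_dotProduct, hua, hu] using this
  -- H.mulVec u = e
  have hHu : H.mulVec u = e := by
    rw [hu, Matrix.mulVec_mulVec, hmul, Matrix.one_mulVec]
  -- cross term: for any v, u ⬝ᵥ H.mulVec v = v a
  have hcross : ∀ v : Fin n → ℝ, u ⬝ᵥ H.mulVec v = v a := by
    intro v
    rw [Matrix.dotProduct_mulVec, ← Matrix.mulVec_transpose, hsymm.eq, hHu]
    simp [he, single_dotProduct]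
  have huu : u ⬝ᵥ H.mulVec u = β := by rw [hcross, hua]
  -- key decomposition
  have key : ∀ v : Fin n → ℝ, v a = σ →
      v ⬝ᵥ H.mulVec v
        = (v - (σ / β) • u) ⬝ᵥ H.mulVec (v - (σ / β) • u) + σ ^ 2 / β := by
    intro v hva
    have hvu : v ⬝ᵥ H.mulVec u = u ⬝ᵥ H.mulVec v := by
      rw [Matrix.dotProduct_mulVec, ← Matrix.mulVec_transpose, hsymm.eq]
      exact dotProduct_comm _ _
    have h1 : u ⬝ᵥ H.mulVec v = σ := by rw [hcross, hva]
    have h2 : v ⬝ᵥ H.mulVec u = σ := by rw [hvu, h1]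
    have hexp : (v - (σ / β) • u) ⬝ᵥ H.mulVec (v - (σ / β) • u)
        = v ⬝ᵥ H.mulVec v - (σ / β) * σ - ((σ / β) * σ - (σ / β) * ((σ / β) * β)) := by
      simp [Matrix.mulVec_sub, Matrix.mulVec_smul, dotProduct_sub,
        sub_dotProduct, dotProduct_smul, smul_dotProduct,
        h1, h2, huu, smul_eq_mul, mul_sub]
    rw [hexp]
    field_simp
    ring
  -- the minimizer
  set x₀ : Fin n → ℝ := xbar + (σ / β) • u with hx₀
  have hx₀mem : x₀ a = xbar a + σ := by
    simp [hx₀, hua]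
    field_simp
  have hx₀val : q x₀ = fxbar + σ ^ 2 / (2 * β) := by
    rw [hq]
    have : x₀ - xbar = (σ / β) • u := by simp [hx₀]
    rw [this]
    simp [Matrix.mulVec_smul, dotProduct_smul, smul_dotProduct, huu,
      smul_eq_mul]
    field_simp
  -- lower bound
  have hlb : ∀ y ∈ q '' {x | x a = xbar a + σ}, fxbar + σ ^ 2 / (2 * β) ≤ y := by
    rintro y ⟨x, hx, rfl⟩
    rw [hq]
    have hva : (x - xbar) a = σ := by
      have : x a = xbar a + σ := hx
      simp [Pi.sub_apply, this]
    rw [key (x - xbar) hva]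
    have hnn : 0 ≤ (x - xbar - (σ / β) • u) ⬝ᵥ H.mulVec (x - xbar - (σ / β) • u) :=
      by have := hpd.posSemidef.dotProduct_mulVec_nonneg (x - xbar - (σ / β) • u); rwa [star_trivial] at this
    have : σ ^ 2 / (2 * β) ≤ 1 / 2 * ((x - xbar - (σ / β) • u) ⬝ᵥ
        H.mulVec (x - xbar - (σ / β) • u) + σ ^ 2 / β) := by
      have : σ ^ 2 / (2 * β) = 1 / 2 * (σ ^ 2 / β) := by field_simp
      rw [this]
      nlinarith
    linarith
  have hmem : fxbar + σ ^ 2 / (2 * β) ∈ q '' {x | x a = xbar a + σ} :=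
    ⟨x₀, hx₀mem, hx₀val⟩
  have := le_antisymm (csInf_le ⟨_, hlb⟩ hmem) (le_csInf ⟨_, hmem⟩ hlb)
  rw [this]
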